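/- (Corollary: many dimensions.) Fix 0 < ν_R < ν_P, and for each positive integer k define f_k(ν) := (1/V_{1,k})·(2πν)^{−k/2}·∫_{B_k} exp(−‖x‖²/(2ν)) dx, where B_k is the closed unit ball in ℝ^k and V_{1,k} = π^{k/2}/Γ(k/2+1) is its volume. Then lim_{k→∞} f_k(ν_R)/f_k(ν_P) = ∞, and consequently lim_{k→∞} f_k(ν_R)/( f_k(ν_R) + f_k(ν_P) ) = 1. -/

import Mathlib

open Real MeasureTheory Filter

/-- `f_k(ν) := (1/V_{1,k})·(2πν)^{−k/2}·∫_{B_k} exp(−‖x‖²/(2ν)) dx`, the density at `0` of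
`X + Z` for `X` uniform on the unit ball `B_k ⊆ ℝ^k` and `Z ~ N(0, ν I_k)` independent.
Here `V_{1,k} = π^{k/2}/Γ(k/2+1)` is the volume of the unit ball. -/
noncomputable def densAtZero (k : ℕ) (ν : ℝ) : ℝ :=
  (1 / (Real.pi ^ ((k : ℝ) / 2) / Real.Gamma ((k : ℝ) / 2 + 1))) *
    (2 * Real.pi * ν) ^ (-(k : ℝ) / 2) *
    ∫ x in Metric.closedBall (0 : EuclideanSpace ℝ (Fin k)) 1,
      Real.exp (-‖x‖ ^ 2 / (2 * ν))

section aux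

variable (k : ℕ) (ν : ℝ)

lemma aux_compact : IsCompact (Metric.closedBall (0 : EuclideanSpace ℝ (Fin k)) 1) :=
  isCompact_closedBall _ _

lemma aux_vol_pos : 0 < (volume (Metric.closedBall (0 : EuclideanSpace ℝ (Fin k)) 1)).toReal := by
  refine ENNReal.toReal_pos ?_ (aux_compact k).measure_lt_top.ne
  exact (Metric.measure_closedBall_pos volume 0 one_pos).ne'

lemma aux_integrable (hν : 0 < ν) :
    IntegrableOn (fun x : EuclideanSpace ℝ (Fin k) => Real.exp (-‖x‖ ^ 2 / (2 * ν)))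
      (Metric.closedBall 0 1) := by
  refine (Continuous.continuousOn ?_).integrableOn_compact (aux_compact k)
  continuity

lemma aux_integral_le (hν : 0 < ν) :
    (∫ x in Metric.closedBall (0 : EuclideanSpace ℝ (Fin k)) 1,
      Real.exp (-‖x‖ ^ 2 / (2 * ν)))
      ≤ (volume (Metric.closedBall (0 : EuclideanSpace ℝ (Fin k)) 1)).toReal := by
  have h := norm_setIntegral_le_of_norm_le_const (μ := volume)
    (s := Metric.closedBall (0 : EuclideanSpace ℝ (Fin k)) 1) (C := 1)
    (f := fun x : EuclideanSpace ℝ (Fin k) => Real.exp (-‖x‖ ^ 2 / (2 * ν)))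
    (aux_compact k).measure_lt_top
    (fun x _ => by
      rw [Real.norm_eq_abs, abs_of_pos (Real.exp_pos _)]
      refine Real.exp_le_one_iff.2 ?_
      apply div_nonpos_of_nonpos_of_nonneg
      · simp [sq_nonneg]
      · positivity)
  rw [one_mul] at h
  exact (le_abs_self _).trans h

lemma aux_le_integral (hν : 0 < ν) :
    Real.exp (-(1 / (2 * ν))) *
        (volume (Metric.closedBall (0 : EuclideanSpace ℝ (Fin k)) 1)).toReal
      ≤ ∫ x in Metric.closedBall (0 : EuclideanSpace ℝ (Fin k)) 1,
          Real.exp (-‖x‖ ^ 2 / (2 * ν)) := by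
  rw [mul_comm, ← smul_eq_mul]
  refine setIntegral_ge_of_const_le measurableSet_closedBall
    (aux_compact k).measure_lt_top.ne (fun x hx => ?_) (aux_integrable k ν hν)
  refine Real.exp_le_exp.2 ?_
  rw [neg_div]
  refine neg_le_neg ?_
  have hx' : ‖x‖ ≤ 1 := by simpa using hx
  have h2 : ‖x‖ ^ 2 ≤ 1 := by
    calc ‖x‖ ^ 2 ≤ 1 ^ 2 := by gcongr
      _ = 1 := one_pow 2
  exact div_le_div_of_nonneg_right h2 (by positivity)

lemma aux_integral_pos (hν : 0 < ν) :
    0 < ∫ x in Metric.closedBall (0 : EuclideanSpace ℝ (Fin k)) 1,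
        Real.exp (-‖x‖ ^ 2 / (2 * ν)) :=
  lt_of_lt_of_le (mul_pos (Real.exp_pos _) (aux_vol_pos k)) (aux_le_integral k ν hν)

end aux

lemma aux_A_pos (k : ℕ) :
    0 < 1 / (Real.pi ^ ((k : ℝ) / 2) / Real.Gamma ((k : ℝ) / 2 + 1)) := by
  have h1 : 0 < Real.pi ^ ((k : ℝ) / 2) := Real.rpow_pos_of_pos Real.pi_pos _
  have h2 : 0 < Real.Gamma ((k : ℝ) / 2 + 1) := Real.Gamma_pos_of_pos (by positivity)
  positivity

lemma dens_pos (k : ℕ) (ν : ℝ) (hν : 0 < ν) : 0 < densAtZero k ν := by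
  unfold densAtZero
  have hB : (0:ℝ) < (2 * Real.pi * ν) ^ (-(k : ℝ) / 2) :=
    Real.rpow_pos_of_pos (by positivity) _
  exact mul_pos (mul_pos (aux_A_pos k) hB) (aux_integral_pos k ν hν)

lemma ratio_lower (νR νP : ℝ) (hR : 0 < νR) (hRP : νR < νP) (k : ℕ) :
    Real.exp (-(1 / (2 * νR))) * (νP / νR) ^ ((k : ℝ) / 2)
      ≤ densAtZero k νR / densAtZero k νP := by
  have hP : 0 < νP := hR.trans hRP
  set A := 1 / (Real.pi ^ ((k : ℝ) / 2) / Real.Gamma ((k : ℝ) / 2 + 1)) with hAdef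
  set BR := (2 * Real.pi * νR) ^ (-(k : ℝ) / 2) with hBRdef
  set BP := (2 * Real.pi * νP) ^ (-(k : ℝ) / 2) with hBPdef
  set V := (volume (Metric.closedBall (0 : EuclideanSpace ℝ (Fin k)) 1)).toReal with hVdef
  set e := Real.exp (-(1 / (2 * νR))) with hedef
  have hA : 0 < A := aux_A_pos k
  have hBR : 0 < BR := Real.rpow_pos_of_pos (by positivity) _
  have hBP : 0 < BP := Real.rpow_pos_of_pos (by positivity) _
  have hV : 0 < V := aux_vol_pos k
  have he : 0 < e := Real.exp_pos _
  have h1 : A * BR * (e * V) ≤ densAtZero k νR := by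
    unfold densAtZero
    gcongr
    exact aux_le_integral k νR hR
  have h2 : densAtZero k νP ≤ A * BP * V := by
    unfold densAtZero
    gcongr
    exact aux_integral_le k νP hP
  have key : BR / BP = (νP / νR) ^ ((k : ℝ) / 2) := by
    rw [hBRdef, hBPdef, neg_div, Real.rpow_neg (by positivity),
      Real.rpow_neg (by positivity), inv_div_inv,
      ← Real.div_rpow (by positivity) (by positivity)]
    congr 1
    field_simp
  have heq : e * (νP / νR) ^ ((k : ℝ) / 2) = (A * BR * (e * V)) / (A * BP * V) := by
    rw [← key]
    field_simp
  rw [heq]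
  exact div_le_div₀ (dens_pos k νR hR).le h1 (dens_pos k νP hP) h2


/-- Many dimensions: for fixed `0 < ν_R < ν_P`, `f_k(ν_R)/f_k(ν_P) → ∞` and
`f_k(ν_R)/(f_k(ν_R) + f_k(ν_P)) → 1` as `k → ∞`. -/
theorem densAtZero_ratio_tendsto_atTop (νR νP : ℝ) (hR : 0 < νR) (hRP : νR < νP) :
    Tendsto (fun k : ℕ => densAtZero k νR / densAtZero k νP) atTop atTop ∧
    Tendsto (fun k : ℕ => densAtZero k νR / (densAtZero k νR + densAtZero k νP))
      atTop (nhds 1) := by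
  have hP : 0 < νP := hR.trans hRP
  have hr1 : 1 < νP / νR := (one_lt_div hR).2 hRP
  have hg : Tendsto (fun k : ℕ =>
      Real.exp (-(1 / (2 * νR))) * (νP / νR) ^ ((k : ℝ) / 2)) atTop atTop := by
    have hbase : 1 < (νP / νR) ^ ((1:ℝ) / 2) :=
      Real.one_lt_rpow_iff_of_pos (by positivity) |>.2 (Or.inl ⟨hr1, by norm_num⟩)
    have hpow : Tendsto (fun k : ℕ => ((νP / νR) ^ ((1:ℝ) / 2)) ^ k) atTop atTop :=
      tendsto_pow_atTop_atTop_of_one_lt hbase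
    have hrw : ∀ k : ℕ, (νP / νR) ^ ((k : ℝ) / 2) = ((νP / νR) ^ ((1:ℝ) / 2)) ^ k := by
      intro k
      rw [← Real.rpow_natCast ((νP / νR) ^ ((1:ℝ)/2)) k, ← Real.rpow_mul (by positivity)]
      congr 1
      ring
    simp only [hrw]
    exact hpow.const_mul_atTop (Real.exp_pos _)
  have h1 : Tendsto (fun k : ℕ => densAtZero k νR / densAtZero k νP) atTop atTop :=
    tendsto_atTop_mono (ratio_lower νR νP hR hRP) hg
  refine ⟨h1, ?_⟩
  have hf : Tendsto (fun r : ℝ => r / (r + 1)) atTop (nhds 1) := by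
    have h0 : Tendsto (fun r : ℝ => 1 - (r + 1)⁻¹) atTop (nhds (1 - 0)) :=
      tendsto_const_nhds.sub
        (tendsto_inv_atTop_zero.comp (tendsto_atTop_add_const_right _ 1 tendsto_id))
    rw [sub_zero] at h0
    refine h0.congr' ?_
    filter_upwards [eventually_gt_atTop (0:ℝ)] with r hr
    have : r + 1 ≠ 0 := by positivity
    field_simp
    ring
  have hcomp := hf.comp h1
  refine hcomp.congr fun k => ?_
  have hdR : 0 < densAtZero k νR := dens_pos k νR hR
  have hdP : 0 < densAtZero k νP := dens_pos k νP hP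
  simp only [Function.comp]
  field_simp
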